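/- Let $\alpha, \beta, R_0 > 0$ and define $h(a,b) = \left[ 1 + \frac{1}{a} - \frac{2(1+b)}{1+b+e^{2(b-a)}(b-1)} \right]^{-1}$. Then as $\varepsilon \to 0^+$, $\frac{\beta}{\alpha}\frac{1}{\sqrt{\alpha+\beta}} h(\varepsilon\sqrt{\alpha+\beta}, R_0\sqrt{\alpha+\beta}) = \frac{\beta}{\alpha}\varepsilon + \frac{\beta}{\alpha R_0}\left[ \frac{1 - R_0\sqrt{\alpha+\beta}\tanh(R_0\sqrt{\alpha+\beta})}{1 - (R_0\sqrt{\alpha+\beta})^{-1}\tanh(R_0\sqrt{\alpha+\beta})} \right] \varepsilon^2 + O(\varepsilon^3).$ -/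

import Mathlib

open Filter Asymptotics

noncomputable def hfun (a b : ℝ) : ℝ :=
  (1 + 1 / a - 2 * (1 + b) / (1 + b + Real.exp (2 * (b - a)) * (b - 1)))⁻¹

lemma aux_gpos {x : ℝ} (hx : 0 < x) :
    0 < x * (Real.exp x + Real.exp (-x)) - (Real.exp x - Real.exp (-x)) := by
  set g : ℝ → ℝ := fun y => y * (Real.exp y + Real.exp (-y)) - (Real.exp y - Real.exp (-y))
    with hg
  have hd : ∀ y : ℝ, HasDerivAt g (y * (Real.exp y - Real.exp (-y))) y := by
    intro y
    have h1 : HasDerivAt Real.exp (Real.exp y) y := Real.hasDerivAt_exp y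
    have h2 : HasDerivAt (fun y : ℝ => Real.exp (-y)) (-Real.exp (-y)) y := by
      simpa using (hasDerivAt_neg y).exp
    have h : HasDerivAt g (1 * (Real.exp y + Real.exp (-y)) + y * (Real.exp y + -Real.exp (-y)) -
        (Real.exp y - -Real.exp (-y))) y := ((hasDerivAt_id y).mul (h1.add h2)).sub (h1.sub h2)
    convert h using 1
    ring
  have hmono : StrictMonoOn g (Set.Ici 0) := by
    apply strictMonoOn_of_deriv_pos (convex_Ici 0)
    · exact fun y _ => (hd y).differentiableAt.continuousAt.continuousWithinAt
    · intro y hy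
      rw [interior_Ici] at hy
      rw [(hd y).deriv]
      have h1 : Real.exp (-y) < Real.exp y := Real.exp_lt_exp.mpr (by linarith [hy.out])
      exact mul_pos hy.out (sub_pos.mpr h1)
  have h0 : g 0 = 0 := by simp [hg]
  have := hmono (Set.self_mem_Ici) (Set.mem_Ici.mpr hx.le) hx
  rw [h0] at this
  exact this

lemma aux_Npos {b : ℝ} (hb : 0 < b) : 0 < 1 + b + Real.exp (2*b) * (b - 1) := by
  have h := aux_gpos hb
  have he : Real.exp b * Real.exp (-b) = 1 := by rw [← Real.exp_add]; simp
  have h2 : Real.exp (2*b) = Real.exp b * Real.exp b := by rw [← Real.exp_add]; ring_nf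
  nlinarith [Real.exp_pos b, Real.exp_pos (-b), mul_pos (Real.exp_pos b) h]

lemma aux_core {b : ℝ} (hb : 0 < b) :
    (1 - b * Real.tanh b)/(1 - b⁻¹ * Real.tanh b)
      = -(b * (1 - 2*(1+b)/(1 + b + Real.exp (2*b)*(b-1)))) := by
  have hE : (0:ℝ) < Real.exp b := Real.exp_pos b
  have hEs : Real.exp b + (Real.exp b)⁻¹ ≠ 0 := by positivity
  have hT : Real.tanh b = (Real.exp b - (Real.exp b)⁻¹)/(Real.exp b + (Real.exp b)⁻¹) := by
    rw [Real.tanh_eq_sinh_div_cosh, Real.sinh_eq, Real.cosh_eq, Real.exp_neg]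
    rw [div_div_div_comm]
    norm_num
  have hN : 0 < 1 + b + Real.exp (2*b)*(b-1) := aux_Npos hb
  have hg : 0 < b * (Real.exp b + (Real.exp b)⁻¹) - (Real.exp b - (Real.exp b)⁻¹) := by
    have h := aux_gpos hb; rwa [Real.exp_neg] at h
  have hden : 0 < 1 - b⁻¹ * Real.tanh b := by
    rw [hT, inv_mul_eq_div, div_div, sub_pos, div_lt_one (by positivity)]
    nlinarith [hg]
  have h2b : Real.exp (2*b) = Real.exp b ^ 2 := by rw [two_mul, Real.exp_add, sq]
  rw [h2b] at hN
  rw [hT, h2b, div_eq_iff (by rw [hT] at hden; exact hden.ne')]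
  field_simp
  ring

lemma aux_alg (x y ε μ c : ℝ) (hε : ε ≠ 0) (hμ : μ ≠ 0) (hD : 1 + ε*μ*y ≠ 0) :
    c * (1/μ) * (ε*μ/(1 + ε*μ*y)) - (c*ε + -(c*μ*x)*ε^2)
      = ε^3 * (c * μ * ((x - y)/ε + μ*x*y)/(1 + ε*μ*y)) := by
  rw [eq_comm, mul_div_assoc', div_eq_iff hD]
  field_simp
  ring

theorem stmt_7 (α β R₀ : ℝ) (hα : 0 < α) (hβ : 0 < β) (hR : 0 < R₀) :
    (fun ε : ℝ =>
        β / α * (1 / Real.sqrt (α + β)) *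
            hfun (ε * Real.sqrt (α + β)) (R₀ * Real.sqrt (α + β)) -
          (β / α * ε +
            β / (α * R₀) *
              ((1 - R₀ * Real.sqrt (α + β) * Real.tanh (R₀ * Real.sqrt (α + β))) /
                (1 - (R₀ * Real.sqrt (α + β))⁻¹ * Real.tanh (R₀ * Real.sqrt (α + β)))) *
              ε ^ 2))
      =O[nhdsWithin 0 (Set.Ioi 0)] fun ε : ℝ => ε ^ 3 := by
  have hαβ : 0 < α + β := by linarith
  set μ := Real.sqrt (α + β) with hμdef
  have hμ : 0 < μ := Real.sqrt_pos.mpr hαβ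
  set b := R₀ * μ with hbdef
  have hb : 0 < b := mul_pos hR hμ
  set ψ : ℝ → ℝ := fun ε => 1 - 2*(1+b)/(1 + b + Real.exp (2*(b - ε*μ))*(b-1)) with hψdef
  -- positivity of the denominator N at 0
  have hN0 : 0 < 1 + b + Real.exp (2*(b - 0*μ))*(b-1) := by
    simpa using aux_Npos hb
  -- continuity facts
  have hNc : Continuous (fun ε : ℝ => 1 + b + Real.exp (2*(b - ε*μ))*(b-1)) := by fun_prop
  have hNev : ∀ᶠ ε in nhds (0:ℝ), 0 < 1 + b + Real.exp (2*(b - ε*μ))*(b-1) :=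
    (hNc.continuousAt (x := 0)).eventually (eventually_gt_nhds hN0)
  have hψc : ContinuousAt ψ 0 :=
    continuousAt_const.sub (continuousAt_const.div hNc.continuousAt hN0.ne')
  have hDc : ContinuousAt (fun ε : ℝ => 1 + ε*μ*ψ ε) 0 :=
    continuousAt_const.add (((continuousAt_id.mul continuousAt_const)).mul hψc)
  have hD0 : (0:ℝ) < 1 + 0*μ*ψ 0 := by norm_num
  have hDev : ∀ᶠ ε in nhds (0:ℝ), 0 < 1 + ε*μ*ψ ε :=
    hDc.eventually (eventually_gt_nhds hD0)
  -- derivative of ψ at 0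
  have hNder : HasDerivAt (fun ε : ℝ => 1 + b + Real.exp (2*(b - ε*μ))*(b-1))
      (Real.exp (2*(b - 0*μ)) * (2 * -(1*μ)) * (b-1)) 0 := by
    have h1 : HasDerivAt (fun ε : ℝ => ε * μ) (1*μ) 0 := (hasDerivAt_id 0).mul_const μ
    have h2 : HasDerivAt (fun ε : ℝ => b - ε*μ) (-(1*μ)) 0 := h1.const_sub b
    have h3 := h2.const_mul 2
    have h4 := h3.exp
    exact (h4.mul_const (b-1)).const_add (1+b)
  obtain ⟨d, hψd⟩ : ∃ d, HasDerivAt ψ d 0 :=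
    ⟨_, ((hasDerivAt_const (0:ℝ) (2*(1+b))).div hNder hN0.ne').const_sub 1⟩
  have hsl2 : Tendsto (slope ψ 0) (nhdsWithin 0 (Set.Ioi 0)) (nhds d) :=
    (hasDerivAt_iff_tendsto_slope.mp hψd).mono_left
      (nhdsWithin_mono 0 (fun x hx => ne_of_gt hx))
  have hA : Tendsto (fun ε => (ψ 0 - ψ ε)/ε) (nhdsWithin 0 (Set.Ioi 0)) (nhds (-d)) := by
    have heq : (fun ε => (ψ 0 - ψ ε)/ε) = fun ε => -(slope ψ 0 ε) := by
      funext ε; rw [slope_def_field]; ring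
    rw [heq]; exact hsl2.neg
  have hψt : Tendsto ψ (nhdsWithin 0 (Set.Ioi 0)) (nhds (ψ 0)) :=
    hψc.tendsto.mono_left nhdsWithin_le_nhds
  have hDt : Tendsto (fun ε : ℝ => 1 + ε*μ*ψ ε) (nhdsWithin 0 (Set.Ioi 0)) (nhds (1 + 0*μ*ψ 0)) :=
    hDc.tendsto.mono_left nhdsWithin_le_nhds
  have hGt : Tendsto (fun ε : ℝ => β/α * μ * ((ψ 0 - ψ ε)/ε + μ * ψ 0 * ψ ε) / (1 + ε*μ*ψ ε))
      (nhdsWithin 0 (Set.Ioi 0)) (nhds (β/α * μ * (-d + μ * ψ 0 * ψ 0) / (1 + 0*μ*ψ 0))) :=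
    (tendsto_const_nhds.mul (hA.add (tendsto_const_nhds.mul hψt))).div hDt hD0.ne'
  have hGO : (fun ε : ℝ => β/α * μ * ((ψ 0 - ψ ε)/ε + μ * ψ 0 * ψ ε) / (1 + ε*μ*ψ ε))
      =O[nhdsWithin 0 (Set.Ioi 0)] (fun _ => (1:ℝ)) := hGt.isBigO_one ℝ
  have hcube : (fun ε : ℝ => ε^3 * (β/α * μ * ((ψ 0 - ψ ε)/ε + μ * ψ 0 * ψ ε) / (1 + ε*μ*ψ ε)))
      =O[nhdsWithin 0 (Set.Ioi 0)] (fun ε : ℝ => ε^3) := by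
    simpa using (isBigO_refl (fun ε : ℝ => ε^3) (nhdsWithin 0 (Set.Ioi 0))).mul hGO
  refine Filter.EventuallyEq.trans_isBigO ?_ hcube
  -- coefficient identity
  have hψ0 : ψ 0 = 1 - 2*(1+b)/(1 + b + Real.exp (2*b)*(b-1)) := by
    rw [hψdef]; norm_num
  have hcore : (1 - b * Real.tanh b)/(1 - b⁻¹ * Real.tanh b) = -(b * ψ 0) := by
    rw [hψ0]; exact aux_core hb
  have hcoef : β / (α * R₀) * ((1 - b * Real.tanh b)/(1 - b⁻¹ * Real.tanh b))
      = -(β/α * μ * ψ 0) := by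
    rw [hcore]
    have hμR : μ = b / R₀ := by rw [hbdef]; field_simp
    rw [hμR]; field_simp
  filter_upwards [self_mem_nhdsWithin, hNev.filter_mono nhdsWithin_le_nhds,
    hDev.filter_mono nhdsWithin_le_nhds] with ε hε hNε hDε
  have hhf : hfun (ε*μ) b = ε*μ/(1 + ε*μ*ψ ε) := by
    have hεμ : ε * μ ≠ 0 := mul_ne_zero (ne_of_gt hε) hμ.ne'
    rw [hfun, show (1 + 1/(ε*μ) - 2*(1+b)/(1 + b + Real.exp (2*(b - ε*μ))*(b-1)))
        = (1 + ε*μ*ψ ε)/(ε*μ) from by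
      have hε0 : ε ≠ 0 := ne_of_gt hε
      rw [hψdef]; field_simp; ring, inv_div]
  rw [hcoef, hhf]
  exact aux_alg (ψ 0) (ψ ε) ε μ (β/α) (ne_of_gt hε) hμ.ne' hDε.ne'
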